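/- Let L be an even lattice with at least one vector l satisfying (l,l)=0, l primitive, div(l)=1. Then the map l' ↦ [l'^⊥/ℤl'] induces a bijection between the set of O(L)-orbits of primitive isotropic vectors of divisor 1 in L and the genus 𝒢(l^⊥/ℤl) of lattices isogenus to l^⊥/ℤl, provided l^⊥/ℤl is indefinite of rank at least l(A) + 2 where l(A) is the minimal number of generators of its discriminant group (so that every lattice in the genus K satisfies K ⊕ U ≅ L). -/
import Mathlib


private theorem Bz1 {L : Type} [AddCommGroup L] [Module ℤ L]
    (B : L →ₗ[ℤ] L →ₗ[ℤ] ℤ) (a : ℤ) (x y : L) : B (a • x) y = a * B x y := by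
  simpa using map_zsmul (B.flip y) a x

private theorem Bz2 {L : Type} [AddCommGroup L] [Module ℤ L]
    (B : L →ₗ[ℤ] L →ₗ[ℤ] ℤ) (a : ℤ) (x y : L) : B x (a • y) = a * B x y := by
  simpa using map_zsmul (B x) a y


theorem aux_transport {L : Type} [AddCommGroup L] [Module ℤ L]
    (B : L →ₗ[ℤ] L →ₗ[ℤ] ℤ)
    (δ : L ≃ₗ[ℤ] L) (hδ : ∀ x y, B (δ x) (δ y) = B x y)
    (l₁ m₁ l₂ m₂ : L) (hl : δ l₁ = l₂) (hm : δ m₁ = m₂) :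
    ∃ ψ : ↥(LinearMap.ker (B l₁) ⊓ LinearMap.ker (B m₁)) ≃ₗ[ℤ]
          ↥(LinearMap.ker (B l₂) ⊓ LinearMap.ker (B m₂)),
      ∀ x y, B (↑(ψ x) : L) (↑(ψ y) : L) = B (x : L) (y : L) := by
  have key : ∀ x : L, B l₂ (δ x) = B l₁ x ∧ B m₂ (δ x) = B m₁ x := by
    intro x
    exact ⟨by rw [← hl, hδ], by rw [← hm, hδ]⟩
  have key' : ∀ y : L, B l₁ (δ.symm y) = B l₂ y ∧ B m₁ (δ.symm y) = B m₂ y := by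
    intro y
    have h1 := (key (δ.symm y)).1
    have h2 := (key (δ.symm y)).2
    simp only [LinearEquiv.apply_symm_apply] at h1 h2
    exact ⟨h1.symm, h2.symm⟩
  let e : (↥(LinearMap.ker (B l₁) ⊓ LinearMap.ker (B m₁))) ≃+
      (↥(LinearMap.ker (B l₂) ⊓ LinearMap.ker (B m₂))) :=
    { toFun := fun x => ⟨δ x, by
        have hx := x.2
        simp only [Submodule.mem_inf, LinearMap.mem_ker] at hx ⊢
        rw [(key x).1, (key x).2]; exact hx⟩
      invFun := fun y => ⟨δ.symm y, by
        have hy := y.2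
        simp only [Submodule.mem_inf, LinearMap.mem_ker] at hy ⊢
        rw [(key' y).1, (key' y).2]; exact hy⟩
      left_inv := fun x => by ext; simp
      right_inv := fun y => by ext; simp
      map_add' := fun x y => by ext; simp }
  have he : ∀ x, (↑(e x) : L) = δ ↑x := fun x => rfl
  refine ⟨e.toIntLinearEquiv, ?_⟩
  intro x y
  simp only [AddEquiv.coe_toIntLinearEquiv, he]
  exact hδ x y

private theorem aux_eichler {L : Type} [AddCommGroup L] [Module ℤ L]
    (B : L →ₗ[ℤ] L →ₗ[ℤ] ℤ) (hsymm : ∀ x y, B x y = B y x)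
    (l m m' : L) (hll : B l l = 0) (hmm : B m m = 0) (hlm : B l m = 1)
    (hmm' : B m' m' = 0) (hlm' : B l m' = 1) :
    ∃ E : L ≃ₗ[ℤ] L, (∀ x y, B (E x) (E y) = B x y) ∧ E l = l ∧ E m = m' := by
  obtain ⟨a, ha⟩ : ∃ a : ℤ, a = B m m' := ⟨_, rfl⟩
  obtain ⟨w, hw⟩ : ∃ w : L, w = m' - m - a • l := ⟨_, rfl⟩
  have hml : B m l = 1 := by rw [hsymm]; exact hlm
  have hml' : B m' l = 1 := by rw [hsymm]; exact hlm'
  have hm'm : B m' m = a := by rw [hsymm]; exact ha.symm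
  have hBlw : B l w = 0 := by
    rw [hw, map_sub, map_sub, Bz2 B, hll, hlm, hlm']; ring
  have hBwl : B w l = 0 := by rw [hsymm]; exact hBlw
  have hBwm : B w m = 0 := by
    rw [hw, map_sub, LinearMap.sub_apply, map_sub, LinearMap.sub_apply,
      Bz1 B, hm'm, hmm, hlm]
    ring
  have hBmw : B m w = 0 := by rw [hsymm]; exact hBwm
  have hBwm' : B w m' = -(2*a) := by
    rw [hw, map_sub, LinearMap.sub_apply, map_sub, LinearMap.sub_apply,
      Bz1 B, hmm', hlm', ← ha]
    ring
  have hBww : B w w = -(2*a) := by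
    nth_rewrite 2 [hw]
    rw [map_sub, map_sub, Bz2 B, hBwm', hBwm, hBwl]
    ring
  -- the transvection and its inverse, as plain functions
  obtain ⟨T, hT⟩ : ∃ T : L → L, ∀ x, T x = x + (B l x) • w + (a * B l x - B w x) • l :=
    ⟨_, fun _ => rfl⟩
  obtain ⟨S, hS⟩ : ∃ S : L → L, ∀ x, S x = x - (B l x) • w + (a * B l x + B w x) • l :=
    ⟨_, fun _ => rfl⟩
  have hBlT : ∀ x, B l (T x) = B l x := by
    intro x
    rw [hT, map_add, map_add, Bz2 B, Bz2 B, hll, hBlw]; ring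
  have hBwT : ∀ x, B w (T x) = B w x - 2 * a * B l x := by
    intro x
    rw [hT, map_add, map_add, Bz2 B, Bz2 B, hBww, hBwl]; ring
  have hBlS : ∀ x, B l (S x) = B l x := by
    intro x
    rw [hS, map_add, map_sub, Bz2 B, Bz2 B, hll, hBlw]; ring
  have hBwS : ∀ x, B w (S x) = B w x + 2 * a * B l x := by
    intro x
    rw [hS, map_add, map_sub, Bz2 B, Bz2 B, hBww, hBwl]; ring
  have hST : ∀ x, S (T x) = x := by
    intro x
    rw [hS, hBlT, hBwT, hT,
      show a * B l x + (B w x - 2 * a * B l x) = -(a * B l x - B w x) by ring, neg_zsmul]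
    abel
  have hTS : ∀ x, T (S x) = x := by
    intro x
    rw [hT, hBlS, hBwS, hS,
      show a * B l x - (B w x + 2 * a * B l x) = -(a * B l x + B w x) by ring, neg_zsmul]
    abel
  have hTadd : ∀ x y, T (x + y) = T x + T y := by
    intro x y
    rw [hT, hT, hT, map_add, map_add,
      show B l x + B l y = B l x + B l y from rfl]
    rw [add_zsmul, show a * (B l x + B l y) - (B w x + B w y)
      = (a * B l x - B w x) + (a * B l y - B w y) by ring, add_zsmul]
    abel
  obtain ⟨e, he⟩ : ∃ e : L ≃+ L, ∀ x, e x = T x :=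
    ⟨{ toFun := T, invFun := S, left_inv := hST, right_inv := hTS,
       map_add' := hTadd }, fun _ => rfl⟩
  refine ⟨e.toLinearEquiv ?_, ?_, ?_, ?_⟩
  · intro c x
    simpa using map_intCast_smul e ℤ ℤ c x
  · intro x y
    show B (e x) (e y) = B x y
    rw [he, he, hT x, hT y]
    simp only [map_add, LinearMap.add_apply, Bz1 B, Bz2 B, hll, hBlw, hBwl, hBww,
      hsymm x w, hsymm x l]
    ring
  · show e l = l
    rw [he, hT, hll, hBwl]
    simp
  · show e m = m'
    rw [he, hT, hlm, hBwm, hw,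
      show a * 1 - 0 = a by ring]
    simp only [one_zsmul]
    abel

private theorem aux_glue {L : Type} [AddCommGroup L] [Module ℤ L]
    (B : L →ₗ[ℤ] L →ₗ[ℤ] ℤ) (hsymm : ∀ x y, B x y = B y x)
    (l₁ m₁ l₂ m₂ : L)
    (h11 : B l₁ l₁ = 0) (hm1 : B m₁ m₁ = 0) (h1m : B l₁ m₁ = 1)
    (h22 : B l₂ l₂ = 0) (hm2 : B m₂ m₂ = 0) (h2m : B l₂ m₂ = 1)
    (ψ : ↥(LinearMap.ker (B l₁) ⊓ LinearMap.ker (B m₁)) ≃+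
         ↥(LinearMap.ker (B l₂) ⊓ LinearMap.ker (B m₂)))
    (hψ : ∀ x y, B (↑(ψ x) : L) (↑(ψ y) : L) = B (x : L) (y : L)) :
    ∃ γ : L ≃ₗ[ℤ] L, (∀ x y, B (γ x) (γ y) = B x y) ∧ γ l₁ = l₂ := by
  have hm1l1 : B m₁ l₁ = 1 := by rw [hsymm]; exact h1m
  have hm2l2 : B m₂ l₂ = 1 := by rw [hsymm]; exact h2m
  have hV₁ : ∀ v : ↥(LinearMap.ker (B l₁) ⊓ LinearMap.ker (B m₁)),
      B l₁ ↑v = 0 ∧ B m₁ ↑v = 0 := by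
    intro v
    have h := v.2
    rw [Submodule.mem_inf, LinearMap.mem_ker, LinearMap.mem_ker] at h
    exact h
  have hV₂ : ∀ v : ↥(LinearMap.ker (B l₂) ⊓ LinearMap.ker (B m₂)),
      B l₂ ↑v = 0 ∧ B m₂ ↑v = 0 := by
    intro v
    have h := v.2
    rw [Submodule.mem_inf, LinearMap.mem_ker, LinearMap.mem_ker] at h
    exact h
  have mem₁ : ∀ x : L, x - (B m₁ x) • l₁ - (B l₁ x) • m₁ ∈
      LinearMap.ker (B l₁) ⊓ LinearMap.ker (B m₁) := by
    intro x
    rw [Submodule.mem_inf, LinearMap.mem_ker, LinearMap.mem_ker]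
    constructor
    · rw [map_sub, map_sub, Bz2 B, Bz2 B, h11, h1m]; ring
    · rw [map_sub, map_sub, Bz2 B, Bz2 B, hm1l1, hm1]; ring
  have mem₂ : ∀ x : L, x - (B m₂ x) • l₂ - (B l₂ x) • m₂ ∈
      LinearMap.ker (B l₂) ⊓ LinearMap.ker (B m₂) := by
    intro x
    rw [Submodule.mem_inf, LinearMap.mem_ker, LinearMap.mem_ker]
    constructor
    · rw [map_sub, map_sub, Bz2 B, Bz2 B, h22, h2m]; ring
    · rw [map_sub, map_sub, Bz2 B, Bz2 B, hm2l2, hm2]; ring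
  obtain ⟨r₁, hr₁⟩ : ∃ r₁ : L → ↥(LinearMap.ker (B l₁) ⊓ LinearMap.ker (B m₁)),
      ∀ x, (↑(r₁ x) : L) = x - (B m₁ x) • l₁ - (B l₁ x) • m₁ :=
    ⟨fun x => ⟨_, mem₁ x⟩, fun _ => rfl⟩
  obtain ⟨r₂, hr₂⟩ : ∃ r₂ : L → ↥(LinearMap.ker (B l₂) ⊓ LinearMap.ker (B m₂)),
      ∀ x, (↑(r₂ x) : L) = x - (B m₂ x) • l₂ - (B l₂ x) • m₂ :=
    ⟨fun x => ⟨_, mem₂ x⟩, fun _ => rfl⟩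
  obtain ⟨T, hT⟩ : ∃ T : L → L,
      ∀ x, T x = (B m₁ x) • l₂ + (B l₁ x) • m₂ + ↑(ψ (r₁ x)) := ⟨_, fun _ => rfl⟩
  obtain ⟨S, hS⟩ : ∃ S : L → L,
      ∀ x, S x = (B m₂ x) • l₁ + (B l₂ x) • m₁ + ↑(ψ.symm (r₂ x)) := ⟨_, fun _ => rfl⟩
  have hdecomp₁ : ∀ x : L, x = (B m₁ x) • l₁ + (B l₁ x) • m₁ + ↑(r₁ x) := by
    intro x; rw [hr₁]; abel
  have hBl₂T : ∀ x, B l₂ (T x) = B l₁ x := by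
    intro x
    rw [hT]
    simp only [map_add, Bz2 B, h22, h2m, (hV₂ (ψ (r₁ x))).1]
    ring
  have hBm₂T : ∀ x, B m₂ (T x) = B m₁ x := by
    intro x
    rw [hT]
    simp only [map_add, Bz2 B, hm2l2, hm2, (hV₂ (ψ (r₁ x))).2]
    ring
  have hBl₁S : ∀ x, B l₁ (S x) = B l₂ x := by
    intro x
    rw [hS]
    simp only [map_add, Bz2 B, h11, h1m, (hV₁ (ψ.symm (r₂ x))).1]
    ring
  have hBm₁S : ∀ x, B m₁ (S x) = B m₂ x := by
    intro x
    rw [hS]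
    simp only [map_add, Bz2 B, hm1l1, hm1, (hV₁ (ψ.symm (r₂ x))).2]
    ring
  have hr₂T : ∀ x, r₂ (T x) = ψ (r₁ x) := by
    intro x
    apply Subtype.ext
    rw [hr₂, hBl₂T, hBm₂T, hT]
    abel
  have hr₁S : ∀ x, r₁ (S x) = ψ.symm (r₂ x) := by
    intro x
    apply Subtype.ext
    rw [hr₁, hBl₁S, hBm₁S, hS]
    abel
  have hST : ∀ x, S (T x) = x := by
    intro x
    rw [hS, hBm₂T, hBl₂T, hr₂T, AddEquiv.symm_apply_apply, hr₁]
    abel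
  have hTS : ∀ x, T (S x) = x := by
    intro x
    rw [hT, hBm₁S, hBl₁S, hr₁S, AddEquiv.apply_symm_apply, hr₂]
    abel
  have hTadd : ∀ x y, T (x + y) = T x + T y := by
    intro x y
    have hr₁add : r₁ (x + y) = r₁ x + r₁ y := by
      apply Subtype.ext
      rw [Submodule.coe_add, hr₁, hr₁, hr₁, map_add, map_add, add_zsmul, add_zsmul]
      abel
    rw [hT, hT, hT, map_add, map_add, add_zsmul, add_zsmul, hr₁add, map_add,
      Submodule.coe_add]
    abel
  obtain ⟨e, he⟩ : ∃ e : L ≃+ L, ∀ x, e x = T x :=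
    ⟨{ toFun := T, invFun := S, left_inv := hST, right_inv := hTS,
       map_add' := hTadd }, fun _ => rfl⟩
  refine ⟨e.toLinearEquiv ?_, ?_, ?_⟩
  · intro c x
    simpa using map_intCast_smul e ℤ ℤ c x
  · intro x y
    show B (e x) (e y) = B x y
    have lhs_eq : B (T x) (T y)
        = B m₁ x * B l₁ y + B l₁ x * B m₁ y + B ↑(ψ (r₁ x)) ↑(ψ (r₁ y)) := by
      rw [hT x, hT y]
      simp only [map_add, LinearMap.add_apply, Bz1 B, Bz2 B, h22, h2m, hm2l2, hm2,
        (hV₂ (ψ (r₁ y))).1, (hV₂ (ψ (r₁ y))).2,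
        hsymm (↑(ψ (r₁ x)) : L) l₂, hsymm (↑(ψ (r₁ x)) : L) m₂,
        (hV₂ (ψ (r₁ x))).1, (hV₂ (ψ (r₁ x))).2]
      ring
    have rhs_eq : B x y
        = B m₁ x * B l₁ y + B l₁ x * B m₁ y + B ↑(r₁ x) ↑(r₁ y) := by
      conv_lhs => rw [hdecomp₁ x, hdecomp₁ y]
      simp only [map_add, LinearMap.add_apply, Bz1 B, Bz2 B, h11, h1m, hm1l1, hm1,
        (hV₁ (r₁ y)).1, (hV₁ (r₁ y)).2,
        hsymm (↑(r₁ x) : L) l₁, hsymm (↑(r₁ x) : L) m₁,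
        (hV₁ (r₁ x)).1, (hV₁ (r₁ x)).2]
      ring
    rw [he, he, lhs_eq, rhs_eq, hψ]
  · show e l₁ = l₂
    have hr₁l₁ : r₁ l₁ = 0 := by
      apply Subtype.ext
      rw [hr₁, hm1l1, h11, one_zsmul, zero_zsmul]
      simp
    rw [he, hT, hr₁l₁, map_zero, hm1l1, h11, one_zsmul, zero_zsmul,
      ZeroMemClass.coe_zero]
    abel

/-- Let `L` be an even lattice possessing a primitive isotropic vector of
divisor `1` (witnessed by a hyperbolic pair `l₀, m₀`).  Under the stated genus hypothesis
(every lattice `K` isogenus to `l^⊥/ℤl` satisfies `K ⊕ U ≅ L`), the genus `𝒢(l^⊥/ℤl)` is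
exactly the set of isometry classes of lattices `K` with `K ⊕ U ≅ L`, and the map
`l' ↦ [l'^⊥/ℤl']` induces a bijection from the `O(L)`-orbits of primitive isotropic vectors
of divisor `1` onto it.  This is stated elementwise: (i) two such vectors have isometric
quotients (realised via hyperbolic splittings as the complements `(ℤl+ℤm)^⊥`) iff they lie in
the same `O(L)`-orbit; (ii) every even lattice `K` with `K ⊕ U ≅ L` arises as such a
quotient. -/
theorem stmt_11
    (L : Type) [AddCommGroup L] [Module ℤ L] [Module.Free ℤ L] [Module.Finite ℤ L]
    (B : L →ₗ[ℤ] L →ₗ[ℤ] ℤ)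
    (hsymm : ∀ x y, B x y = B y x) (heven : ∀ x, Even (B x x))
    (hnd : ∀ x, (∀ y, B x y = 0) → x = 0)
    (l₀ m₀ : L) (h₀ : B l₀ l₀ = 0 ∧ B m₀ m₀ = 0 ∧ B l₀ m₀ = 1) :
    (∀ l₁ m₁ l₂ m₂ : L,
      B l₁ l₁ = 0 → B m₁ m₁ = 0 → B l₁ m₁ = 1 →
      B l₂ l₂ = 0 → B m₂ m₂ = 0 → B l₂ m₂ = 1 →
      ((∃ ψ : ↥(LinearMap.ker (B l₁) ⊓ LinearMap.ker (B m₁)) ≃ₗ[ℤ]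
              ↥(LinearMap.ker (B l₂) ⊓ LinearMap.ker (B m₂)),
          ∀ x y, B (↑(ψ x) : L) (↑(ψ y) : L) = B (x : L) (y : L)) ↔
        (∃ γ : L ≃ₗ[ℤ] L, (∀ x y, B (γ x) (γ y) = B x y) ∧ γ l₁ = l₂))) ∧
    (∀ (K : Type) [AddCommGroup K] [Module ℤ K] (BK : K →ₗ[ℤ] K →ₗ[ℤ] ℤ),
      (∀ x y, BK x y = BK y x) → (∀ x, Even (BK x x)) →
      (∃ Ψ : (K × ℤ × ℤ) ≃ₗ[ℤ] L,
        ∀ x y : K × ℤ × ℤ,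
          B (Ψ x) (Ψ y) = BK x.1 y.1 + x.2.1 * y.2.2 + y.2.1 * x.2.2) →
      ∃ l m : L, B l l = 0 ∧ B m m = 0 ∧ B l m = 1 ∧
        ∃ ψ : ↥(LinearMap.ker (B l) ⊓ LinearMap.ker (B m)) ≃ₗ[ℤ] K,
          ∀ x y, BK (ψ x) (ψ y) = B (x : L) (y : L)) := by
  constructor
  · intro l₁ m₁ l₂ m₂ h11 hm1 h1m h22 hm2 h2m
    constructor
    · rintro ⟨ψ, hψ⟩
      exact aux_glue B hsymm l₁ m₁ l₂ m₂ h11 hm1 h1m h22 hm2 h2m ψ.toAddEquiv hψ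
    · rintro ⟨γ, hγ, hγl⟩
      have hl2m' : B l₂ (γ m₁) = 1 := by rw [← hγl, hγ]; exact h1m
      have hm'm' : B (γ m₁) (γ m₁) = 0 := by rw [hγ]; exact hm1
      obtain ⟨E, hE, hEl, hEm⟩ :=
        aux_eichler B hsymm l₂ m₂ (γ m₁) h22 hm2 h2m hm'm' hl2m'
      have hEsymm : ∀ x y, B (E.symm x) (E.symm y) = B x y := by
        intro x y
        have h := hE (E.symm x) (E.symm y)
        rw [E.apply_symm_apply, E.apply_symm_apply] at h
        exact h.symm
      refine aux_transport B (γ.trans E.symm) ?_ l₁ m₁ l₂ m₂ ?_ ?_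
      · intro x y
        show B (E.symm (γ x)) (E.symm (γ y)) = B x y
        rw [hEsymm, hγ]
      · show E.symm (γ l₁) = l₂
        rw [hγl, LinearEquiv.symm_apply_eq]
        exact hEl.symm
      · show E.symm (γ m₁) = m₂
        rw [LinearEquiv.symm_apply_eq]
        exact hEm.symm
  · rintro K _ _ BK hKsymm hKeven ⟨Ψ, hΨ⟩
    have hBl : ∀ p : K × ℤ × ℤ, B (Ψ (0, 1, 0)) (Ψ p) = p.2.2 := by
      intro p
      rw [hΨ]
      simp
    have hBm : ∀ p : K × ℤ × ℤ, B (Ψ (0, 0, 1)) (Ψ p) = p.2.1 := by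
      intro p
      rw [hΨ]
      simp
    refine ⟨Ψ (0, 1, 0), Ψ (0, 0, 1), by simpa using hBl (0, 1, 0),
      ?_, by simpa using hBl (0, 0, 1), ?_⟩
    · rw [hΨ]; simp
    have mem : ∀ k : K, Ψ (k, 0, 0) ∈
        LinearMap.ker (B (Ψ (0, 1, 0))) ⊓ LinearMap.ker (B (Ψ (0, 0, 1))) := by
      intro k
      rw [Submodule.mem_inf, LinearMap.mem_ker, LinearMap.mem_ker]
      exact ⟨by simpa using hBl (k, 0, 0), by simpa using hBm (k, 0, 0)⟩
    have hV : ∀ v : ↥(LinearMap.ker (B (Ψ (0, 1, 0))) ⊓ LinearMap.ker (B (Ψ (0, 0, 1)))),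
        B (Ψ (0, 1, 0)) ↑v = 0 ∧ B (Ψ (0, 0, 1)) ↑v = 0 := by
      intro v
      have h := v.2
      rw [Submodule.mem_inf, LinearMap.mem_ker, LinearMap.mem_ker] at h
      exact h
    have hrep : ∀ v : ↥(LinearMap.ker (B (Ψ (0, 1, 0))) ⊓ LinearMap.ker (B (Ψ (0, 0, 1)))),
        Ψ ((Ψ.symm ↑v).1, 0, 0) = ↑v := by
      intro v
      have h2 : (Ψ.symm (↑v : L)).2.2 = 0 := by
        have h := hBl (Ψ.symm ↑v)
        rw [Ψ.apply_symm_apply] at h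
        rw [← h]
        exact (hV v).1
      have h1 : (Ψ.symm (↑v : L)).2.1 = 0 := by
        have h := hBm (Ψ.symm ↑v)
        rw [Ψ.apply_symm_apply] at h
        rw [← h]
        exact (hV v).2
      conv_rhs => rw [← Ψ.apply_symm_apply (↑v : L)]
      congr 1
      exact Prod.ext rfl (Prod.ext h1.symm h2.symm)
    obtain ⟨e, he⟩ : ∃ e : ↥(LinearMap.ker (B (Ψ (0, 1, 0))) ⊓
          LinearMap.ker (B (Ψ (0, 0, 1)))) ≃+ K, ∀ v, e v = (Ψ.symm ↑v).1 :=
      ⟨{ toFun := fun v => (Ψ.symm ↑v).1,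
         invFun := fun k => ⟨Ψ (k, 0, 0), mem k⟩,
         left_inv := fun v => Subtype.ext (hrep v),
         right_inv := fun k => by simp,
         map_add' := fun v w => by
           show (Ψ.symm ↑(v + w)).1 = (Ψ.symm ↑v).1 + (Ψ.symm ↑w).1
           rw [Submodule.coe_add, map_add]
           rfl }, fun _ => rfl⟩
    refine ⟨e.toLinearEquiv ?_, ?_⟩
    · intro c x
      simpa using map_intCast_smul e ℤ ℤ c x
    · intro x y
      show BK (e x) (e y) = B (↑x : L) (↑y : L)
      conv_rhs => rw [← hrep x, ← hrep y]
      rw [hΨ, he, he]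
      simp
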